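/- Let a and b be nonzero vectors in the Euclidean plane ℝ² and let α be the angle between a and b (so 0 ≤ α ≤ π, with cos α = ⟨a,b⟩/(‖a‖·‖b‖)). For θ ∈ ℝ write u(θ) = (cos θ, sin θ). Then the Lebesgue measure of the set { θ ∈ [0, 2π) : ⟨u(θ), a⟩ > 0 and ⟨u(θ), b⟩ > 0 } equals π − α. -/

import Mathlib

open Real MeasureTheory
open scoped RealInnerProductSpace

private lemma cos_pos_window {x : ℝ} (h1 : -(3*π/2) < x) (h2 : x ≤ 3*π/2)
    (hx : 0 < Real.cos x) : -(π/2) < x ∧ x < π/2 := by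
  constructor
  · by_contra h
    push_neg at h
    have : Real.cos x ≤ 0 := by
      rw [← Real.cos_neg]
      exact Real.cos_nonpos_of_pi_div_two_le_of_le (by linarith) (by linarith)
    linarith
  · by_contra h
    push_neg at h
    have : Real.cos x ≤ 0 :=
      Real.cos_nonpos_of_pi_div_two_le_of_le (by linarith) (by linarith)
    linarith

/-- The periodic "both inner products positive" direction set. -/
private def dirSet (φ ψ : ℝ) : Set ℝ :=
  {θ : ℝ | 0 < Real.cos (θ - φ) ∧ 0 < Real.cos (θ - ψ)}

private lemma dirSet_measurable (φ ψ : ℝ) : MeasurableSet (dirSet φ ψ) := by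
  have h1 : MeasurableSet {θ : ℝ | 0 < Real.cos (θ - φ)} :=
    measurableSet_lt measurable_const
      ((Real.continuous_cos.comp (continuous_id.sub continuous_const)).measurable)
  have h2 : MeasurableSet {θ : ℝ | 0 < Real.cos (θ - ψ)} :=
    measurableSet_lt measurable_const
      ((Real.continuous_cos.comp (continuous_id.sub continuous_const)).measurable)
  exact h1.inter h2

private lemma dirSet_invariant (φ ψ : ℝ) (g : AddSubgroup.zmultiples (2*π)) :
    (fun x => g +ᵥ x) ⁻¹' dirSet φ ψ = dirSet φ ψ := by
  obtain ⟨k, hk⟩ := AddSubgroup.mem_zmultiples_iff.mp g.2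
  ext x
  have hvadd : g +ᵥ x = (g : ℝ) + x := rfl
  have h1 : (g : ℝ) + x - φ = x - φ + k * (2*π) := by
    rw [← hk]; push_cast [zsmul_eq_mul]; ring
  have h2 : (g : ℝ) + x - ψ = x - ψ + k * (2*π) := by
    rw [← hk]; push_cast [zsmul_eq_mul]; ring
  simp only [dirSet, Set.mem_preimage, Set.mem_setOf_eq, hvadd, h1, h2,
    Real.cos_add_int_mul_two_pi]

/-- Shifting the window of length `2π` does not change the measure. -/
private lemma dirSet_shift (φ ψ c d : ℝ) :
    volume (dirSet φ ψ ∩ Set.Ioc c (c + 2*π)) = volume (dirSet φ ψ ∩ Set.Ioc d (d + 2*π)) :=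
  (isAddFundamentalDomain_Ioc Real.two_pi_pos c).measure_set_eq
    (isAddFundamentalDomain_Ioc Real.two_pi_pos d)
    (dirSet_measurable φ ψ) (dirSet_invariant φ ψ)

/-- The base computation: for `α ∈ [0, π]`,
the set `{θ ∈ (-π/2, 3π/2] : cos θ > 0 ∧ cos (θ - α) > 0}` is `(α - π/2, π/2)`. -/
private lemma core_set {α : ℝ} (hα0 : 0 ≤ α) (hαπ : α ≤ π) :
    dirSet 0 α ∩ Set.Ioc (-(π/2)) (-(π/2) + 2*π) = Set.Ioo (α - π/2) (π/2) := by
  have hπ := Real.pi_pos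
  ext θ
  simp only [dirSet, Set.mem_inter_iff, Set.mem_setOf_eq, Set.mem_Ioc, Set.mem_Ioo, sub_zero]
  constructor
  · rintro ⟨⟨h1, h2⟩, h3, h4⟩
    have w1 := cos_pos_window (by linarith) (by linarith) h1
    have w2 := cos_pos_window (x := θ - α) (by linarith) (by linarith) h2
    exact ⟨by linarith [w2.1], w1.2⟩
  · rintro ⟨h1, h2⟩
    refine ⟨⟨?_, ?_⟩, by linarith, by linarith⟩
    · exact Real.cos_pos_of_mem_Ioo ⟨by linarith, h2⟩
    · exact Real.cos_pos_of_mem_Ioo ⟨by linarith, by linarith⟩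

private lemma base {α : ℝ} (hα0 : 0 ≤ α) (hαπ : α ≤ π) :
    volume (dirSet 0 α ∩ Set.Ioc (-(π/2)) (-(π/2) + 2*π)) = ENNReal.ofReal (π - α) := by
  rw [core_set hα0 hαπ, Real.volume_Ioo]
  congr 1
  ring

/-- Main measure computation for general phases `φ, ψ` whose difference has cosine `cos α`. -/
private lemma key {φ ψ α : ℝ} (hα0 : 0 ≤ α) (hαπ : α ≤ π)
    (hcos : Real.cos α = Real.cos (ψ - φ)) :
    volume (dirSet φ ψ ∩ Set.Ico 0 (2*π)) = ENNReal.ofReal (π - α) := by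
  -- replace Ico by Ioc (a.e. equal)
  have step1 : volume (dirSet φ ψ ∩ Set.Ico 0 (2*π))
      = volume (dirSet φ ψ ∩ Set.Ioc 0 (0 + 2*π)) := by
    rw [zero_add]
    exact measure_congr (ae_eq_set_inter (Filter.EventuallyEq.refl _ _) Ico_ae_eq_Ioc)
  -- shift the window to start at φ - π/2
  have step2 : volume (dirSet φ ψ ∩ Set.Ioc 0 (0 + 2*π))
      = volume (dirSet φ ψ ∩ Set.Ioc (φ + -(π/2)) (φ + -(π/2) + 2*π)) :=
    dirSet_shift φ ψ 0 (φ + -(π/2))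
  -- translate by φ
  have step3 : volume (dirSet φ ψ ∩ Set.Ioc (φ + -(π/2)) (φ + -(π/2) + 2*π))
      = volume (dirSet 0 (ψ - φ) ∩ Set.Ioc (-(π/2)) (-(π/2) + 2*π)) := by
    rw [← measure_preimage_add volume φ (dirSet φ ψ ∩ Set.Ioc (φ + -(π/2)) (φ + -(π/2) + 2*π))]
    congr 1
    ext x
    simp only [dirSet, Set.mem_preimage, Set.mem_inter_iff, Set.mem_setOf_eq, Set.mem_Ioc]
    constructor
    · rintro ⟨⟨h1, h2⟩, h3, h4⟩
      refine ⟨⟨by simpa using h1, ?_⟩, by linarith, by linarith⟩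
      have h : φ + x - ψ = x - (ψ - φ) := by ring
      rwa [h] at h2
    · rintro ⟨⟨h1, h2⟩, h3, h4⟩
      refine ⟨⟨by simpa using h1, ?_⟩, by linarith, by linarith⟩
      have h : φ + x - ψ = x - (ψ - φ) := by ring
      rw [h]; exact h2
  rw [step1, step2, step3]
  obtain ⟨k, hk | hk⟩ := Real.cos_eq_cos_iff.mp hcos
  · -- ψ - φ = 2kπ + α
    have hDset : dirSet 0 (ψ - φ) = dirSet 0 α := by
      ext x
      have h : x - (ψ - φ) = x - α - k * (2*π) := by rw [hk]; ring
      simp only [dirSet, Set.mem_setOf_eq, h, Real.cos_sub_int_mul_two_pi]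
    rw [hDset]
    exact base hα0 hαπ
  · -- ψ - φ = 2kπ - α
    have hDset : dirSet 0 (ψ - φ) = dirSet 0 (-α) := by
      ext x
      have h : x - (ψ - φ) = x - (-α) - k * (2*π) := by rw [hk]; ring
      simp only [dirSet, Set.mem_setOf_eq, h, Real.cos_sub_int_mul_two_pi]
    rw [hDset]
    -- reflect θ ↦ -θ
    have hneg : -(dirSet 0 (-α) ∩ Set.Ioc (-(π/2)) (-(π/2) + 2*π))
        = dirSet 0 α ∩ Set.Ico (-(3*π/2)) (-(3*π/2) + 2*π) := by
      ext x
      simp only [dirSet, Set.mem_neg, Set.mem_inter_iff, Set.mem_setOf_eq, Set.mem_Ioc,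
        Set.mem_Ico, sub_zero, sub_neg_eq_add]
      constructor
      · rintro ⟨⟨h1, h2⟩, h3, h4⟩
        refine ⟨⟨by rwa [Real.cos_neg] at h1, ?_⟩, by linarith, by linarith⟩
        have h : x - α = -(-x + α) := by ring
        rwa [h, Real.cos_neg]
      · rintro ⟨⟨h1, h2⟩, h3, h4⟩
        refine ⟨⟨by rw [Real.cos_neg]; exact h1, ?_⟩, by linarith, by linarith⟩
        have h : -x + α = -(x - α) := by ring
        rwa [h, Real.cos_neg]
    have hmeas : volume (dirSet 0 (-α) ∩ Set.Ioc (-(π/2)) (-(π/2) + 2*π))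
        = volume (dirSet 0 α ∩ Set.Ico (-(3*π/2)) (-(3*π/2) + 2*π)) := by
      rw [← hneg, Measure.measure_neg]
    rw [hmeas]
    have hae : volume (dirSet 0 α ∩ Set.Ico (-(3*π/2)) (-(3*π/2) + 2*π))
        = volume (dirSet 0 α ∩ Set.Ioc (-(3*π/2)) (-(3*π/2) + 2*π)) :=
      measure_congr (ae_eq_set_inter (Filter.EventuallyEq.refl _ _) Ico_ae_eq_Ioc)
    rw [hae, dirSet_shift 0 α (-(3*π/2)) (-(π/2))]
    exact base hα0 hαπ

/-- Polar decomposition of a nonzero vector in the plane. -/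
private lemma polar (a : EuclideanSpace ℝ (Fin 2)) (ha : a ≠ 0) :
    ∃ φ : ℝ, a 0 = ‖a‖ * Real.cos φ ∧ a 1 = ‖a‖ * Real.sin φ := by
  set z : ℂ := ⟨a 0, a 1⟩ with hz
  have habs : ‖z‖ = ‖a‖ := by
    rw [Complex.norm_def, EuclideanSpace.norm_eq]
    congr 1
    simp only [Complex.normSq, hz, Fin.sum_univ_two, Real.norm_eq_abs, sq_abs,
      MonoidWithZeroHom.coe_mk, ZeroHom.coe_mk]
    ring
  refine ⟨z.arg, ?_, ?_⟩
  · rw [← habs]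
    exact (Complex.norm_mul_cos_arg z).symm
  · rw [← habs]
    exact (Complex.norm_mul_sin_arg z).symm

/-- Geometric core of Lemma 1: for nonzero vectors `a, b` in the Euclidean plane with
angle `α` between them, the Lebesgue measure of the set of directions
`θ ∈ [0, 2π)` whose unit vector `(cos θ, sin θ)` has positive inner product with both
`a` and `b` equals `π - α`. -/
theorem stmt_4 (a b : EuclideanSpace ℝ (Fin 2)) (ha : a ≠ 0) (hb : b ≠ 0) :
    volume {θ : ℝ | θ ∈ Set.Ico (0 : ℝ) (2 * π) ∧
        0 < ⟪(WithLp.equiv 2 (Fin 2 → ℝ)).symm ![Real.cos θ, Real.sin θ], a⟫ ∧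
        0 < ⟪(WithLp.equiv 2 (Fin 2 → ℝ)).symm ![Real.cos θ, Real.sin θ], b⟫} =
      ENNReal.ofReal (π - InnerProductGeometry.angle a b) := by
  obtain ⟨φ, hφ0, hφ1⟩ := polar a ha
  obtain ⟨ψ, hψ0, hψ1⟩ := polar b hb
  have hna : 0 < ‖a‖ := norm_pos_iff.mpr ha
  have hnb : 0 < ‖b‖ := norm_pos_iff.mpr hb
  have hinner : ∀ (θ : ℝ) (c : EuclideanSpace ℝ (Fin 2)),
      ⟪(WithLp.equiv 2 (Fin 2 → ℝ)).symm ![Real.cos θ, Real.sin θ], c⟫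
        = Real.cos θ * c 0 + Real.sin θ * c 1 := by
    intro θ c
    simp [PiLp.inner_apply, Fin.sum_univ_two, RCLike.inner_apply]; ring
  have hinnera : ∀ θ : ℝ, ⟪(WithLp.equiv 2 (Fin 2 → ℝ)).symm ![Real.cos θ, Real.sin θ], a⟫
      = ‖a‖ * Real.cos (θ - φ) := by
    intro θ
    rw [hinner θ a, hφ0, hφ1, Real.cos_sub]; ring
  have hinnerb : ∀ θ : ℝ, ⟪(WithLp.equiv 2 (Fin 2 → ℝ)).symm ![Real.cos θ, Real.sin θ], b⟫
      = ‖b‖ * Real.cos (θ - ψ) := by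
    intro θ
    rw [hinner θ b, hψ0, hψ1, Real.cos_sub]; ring
  have hab : ⟪a, b⟫ = ‖a‖ * ‖b‖ * Real.cos (ψ - φ) := by
    have h : ⟪a, b⟫ = a 0 * b 0 + a 1 * b 1 := by
      simp [PiLp.inner_apply, Fin.sum_univ_two, RCLike.inner_apply]; ring
    rw [h, hφ0, hφ1, hψ0, hψ1, Real.cos_sub]; ring
  have hcos : Real.cos (InnerProductGeometry.angle a b) = Real.cos (ψ - φ) := by
    rw [InnerProductGeometry.cos_angle, hab]
    field_simp
  have hiff : ∀ (c x : ℝ), 0 < c → (0 < c * x ↔ 0 < x) := by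
    intro c x hc
    constructor
    · intro h
      nlinarith
    · intro h
      exact mul_pos hc h
  have hset : {θ : ℝ | θ ∈ Set.Ico (0 : ℝ) (2 * π) ∧
        0 < ⟪(WithLp.equiv 2 (Fin 2 → ℝ)).symm ![Real.cos θ, Real.sin θ], a⟫ ∧
        0 < ⟪(WithLp.equiv 2 (Fin 2 → ℝ)).symm ![Real.cos θ, Real.sin θ], b⟫}
      = dirSet φ ψ ∩ Set.Ico 0 (2*π) := by
    ext θ
    simp only [Set.mem_setOf_eq, dirSet, Set.mem_inter_iff, hinnera θ, hinnerb θ,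
      hiff _ _ hna, hiff _ _ hnb]
    tauto
  rw [hset]
  exact key (InnerProductGeometry.angle_nonneg a b) (InnerProductGeometry.angle_le_pi a b) hcos
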